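/- In L²(ℝ², γ) with γ the standard 2D Gaussian, let Q be the orthogonal projection onto radial functions and P the orthogonal projection onto functions independent of v₁ (Gaussian conditional expectation over v₁). Then the Hermite functions H₂(v₁), H₂(v₂) span an invariant subspace of L = 2λ(I−Q) + μ(I−P), and the restriction of L to span{H₂(v₁), H₂(v₂)} has smallest eigenvalue ((2λ+μ) − √(4λ²+μ²))/2, with eigenvector (2λ/(2λ+μ−Δ))H₂(v₁) + (2λ/(2λ−Δ))H₂(v₂) up to scaling, where Δ = ((2λ+μ) − √(4λ²+μ²))/2. -/

import Mathlib

open Real MeasureTheory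

lemma aux_integrable18 : Integrable (fun x : ℝ => (x ^ 2 - 1) * Real.exp (-x ^ 2 / 2)) := by
  have hb : Integrable (fun x : ℝ => 5 * Real.exp (-(1/4 : ℝ) * x ^ 2)) :=
    (integrable_exp_neg_mul_sq (by norm_num : (0:ℝ) < 1/4)).const_mul 5
  have hc : Continuous (fun x : ℝ => (x ^ 2 - 1) * Real.exp (-x ^ 2 / 2)) := by fun_prop
  refine hb.mono' hc.aestronglyMeasurable ?_
  filter_upwards with x
  have h1 : x ^ 2 / 4 ≤ Real.exp (x ^ 2 / 4) := (Real.add_one_le_exp _).trans' (by linarith)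
  have h2 : (1:ℝ) ≤ Real.exp (x ^ 2 / 4) := by
    nlinarith [Real.add_one_le_exp (x^2/4), sq_nonneg x]
  have hexp : Real.exp (-x ^ 2 / 2) = Real.exp (-(1/4:ℝ) * x^2) / Real.exp (x^2/4) := by
    rw [← Real.exp_sub]; ring_nf
  rw [Real.norm_eq_abs, abs_mul, abs_of_nonneg (Real.exp_nonneg _), hexp]
  have habs : |x ^ 2 - 1| ≤ x ^ 2 + 1 := by
    cases abs_cases (x^2 - 1) with
    | inl h => nlinarith [h.1]
    | inr h => nlinarith [h.1]
  have hpos : (0:ℝ) < Real.exp (x^2/4) := Real.exp_pos _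
  calc |x ^ 2 - 1| * (Real.exp (-(1/4:ℝ)*x^2) / Real.exp (x^2/4))
      ≤ (x^2+1) * (Real.exp (-(1/4:ℝ)*x^2) / Real.exp (x^2/4)) := by
        apply mul_le_mul_of_nonneg_right habs; positivity
    _ ≤ 5 * Real.exp (-(1/4:ℝ)*x^2) := by
        rw [mul_div_assoc', div_le_iff₀ hpos]
        have h5 : x^2 + 1 ≤ 5 * Real.exp (x^2/4) := by nlinarith
        nlinarith [Real.exp_nonneg (-(1/4:ℝ)*x^2), Real.exp_pos (-(1/4:ℝ)*x^2)]

lemma aux_int_zero18 : ∫ x : ℝ, (x ^ 2 - 1) * Real.exp (-x ^ 2 / 2) = 0 := by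
  have hF : ∀ x : ℝ, HasDerivAt (fun y : ℝ => -y * Real.exp (-y ^ 2 / 2))
      ((x ^ 2 - 1) * Real.exp (-x ^ 2 / 2)) x := by
    intro x
    have h1 : HasDerivAt (fun y : ℝ => -y ^ 2 / 2) (-x) x := by
      have := ((hasDerivAt_pow 2 x).neg).div_const 2
      exact this.congr_deriv (by push_cast; ring)
    have h2 : HasDerivAt (fun y : ℝ => Real.exp (-y ^ 2 / 2))
        (Real.exp (-x ^ 2 / 2) * (-x)) x := (Real.hasDerivAt_exp _).comp x h1
    have h3 := ((hasDerivAt_id x).neg).mul h2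
    exact h3.congr_deriv (by simp only [id_eq, Pi.neg_apply]; ring)
  have hlim : Filter.Tendsto (fun R : ℝ => ∫ x in (-R)..R, (x ^ 2 - 1) * Real.exp (-x ^ 2 / 2))
      Filter.atTop (nhds (∫ x : ℝ, (x ^ 2 - 1) * Real.exp (-x ^ 2 / 2))) :=
    intervalIntegral_tendsto_integral aux_integrable18
      Filter.tendsto_neg_atTop_atBot Filter.tendsto_id
  have heval : ∀ R : ℝ, (∫ x in (-R)..R, (x ^ 2 - 1) * Real.exp (-x ^ 2 / 2))
      = -R * Real.exp (-R ^ 2 / 2) - (R * Real.exp (-R ^ 2 / 2)) := by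
    intro R
    rw [intervalIntegral.integral_eq_sub_of_hasDerivAt (fun x _ => hF x)
      aux_integrable18.intervalIntegrable]
    ring_nf
  have key : Filter.Tendsto (fun R : ℝ => R * Real.exp (-R ^ 2 / 2)) Filter.atTop (nhds 0) := by
    have hb : Filter.Tendsto (fun R : ℝ => |R| * Real.exp (-R)) Filter.atTop (nhds 0) := by
      have := (Real.tendsto_pow_mul_exp_neg_atTop_nhds_zero 1).abs
      simp only [pow_one, abs_zero] at this
      apply this.congr'
      filter_upwards [Filter.eventually_ge_atTop (0:ℝ)] with R hR
      rw [abs_mul, abs_of_nonneg (Real.exp_nonneg _)]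
    apply squeeze_zero_norm' _ hb
    filter_upwards [Filter.eventually_ge_atTop (2:ℝ)] with R hR
    rw [Real.norm_eq_abs, abs_mul, abs_of_nonneg (Real.exp_nonneg _)]
    have hee : Real.exp (-R ^ 2 / 2) ≤ Real.exp (-R) := by
      apply Real.exp_le_exp.2; nlinarith
    exact mul_le_mul_of_nonneg_left hee (abs_nonneg R)
  have hlim0 : Filter.Tendsto (fun R : ℝ => -R * Real.exp (-R ^ 2 / 2)
      - (R * Real.exp (-R ^ 2 / 2))) Filter.atTop (nhds 0) := by
    have := key.neg.sub key
    simp only [neg_mul, sub_zero, neg_zero, zero_sub] at this ⊢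
    simpa using this
  exact tendsto_nhds_unique (hlim.congr heval) hlim0

lemma aux_gauss18 : ∫ x : ℝ, Real.exp (-x ^ 2 / 2) = Real.sqrt (2 * π) := by
  have h := integral_gaussian (1/2)
  have he : (fun x : ℝ => Real.exp (-(1/2:ℝ) * x ^ 2)) = fun x : ℝ => Real.exp (-x ^ 2 / 2) := by
    funext x; ring_nf
  rw [he] at h
  rw [h, show π / (1/2 : ℝ) = 2 * π by ring]

lemma aux_integrable_gauss18 : Integrable (fun x : ℝ => Real.exp (-x ^ 2 / 2)) := by
  have h := integrable_exp_neg_mul_sq (by norm_num : (0:ℝ) < 1/2)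
  apply h.congr'
  · exact (by fun_prop : Continuous fun x : ℝ => Real.exp (-x^2/2)).aestronglyMeasurable
  · filter_upwards with x; ring_nf

lemma aux_rot18 (x y a b : ℝ) :
    (∫ θ in (0:ℝ)..(2 * π),
      (x * ((a * Real.cos θ + b * Real.sin θ) ^ 2 - 1)
        + y * ((-a * Real.sin θ + b * Real.cos θ) ^ 2 - 1)))
    = π * (x + y) * (a ^ 2 + b ^ 2) - 2 * π * (x + y) := by
  have hA : (fun θ : ℝ => x * ((a * Real.cos θ + b * Real.sin θ) ^ 2 - 1)
        + y * ((-a * Real.sin θ + b * Real.cos θ) ^ 2 - 1))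
      = fun θ : ℝ => (x * a ^ 2 + y * b ^ 2) * Real.cos θ ^ 2
        + ((x * b ^ 2 + y * a ^ 2) * Real.sin θ ^ 2
        + ((2 * a * b * (x - y)) * (Real.sin θ * Real.cos θ) + (-(x + y)))) := by
    funext θ; ring
  rw [hA]
  have i1 : IntervalIntegrable (fun θ : ℝ => (x * a ^ 2 + y * b ^ 2) * Real.cos θ ^ 2)
      volume 0 (2 * π) := (by fun_prop : Continuous _).intervalIntegrable _ _
  have i2 : IntervalIntegrable (fun θ : ℝ => (x * b ^ 2 + y * a ^ 2) * Real.sin θ ^ 2)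
      volume 0 (2 * π) := (by fun_prop : Continuous _).intervalIntegrable _ _
  have i3 : IntervalIntegrable (fun θ : ℝ => (2 * a * b * (x - y)) * (Real.sin θ * Real.cos θ))
      volume 0 (2 * π) := (by fun_prop : Continuous _).intervalIntegrable _ _
  have i4 : IntervalIntegrable (fun _ : ℝ => -(x + y)) volume 0 (2 * π) :=
    intervalIntegrable_const
  rw [intervalIntegral.integral_add i1 (i2.add (i3.add i4)),
    intervalIntegral.integral_add i2 (i3.add i4),
    intervalIntegral.integral_add i3 i4,
    intervalIntegral.integral_const_mul, intervalIntegral.integral_const_mul,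
    intervalIntegral.integral_const_mul, intervalIntegral.integral_const,
    integral_cos_sq, integral_sin_sq, integral_sin_mul_cos₁]
  simp [Real.cos_two_pi, Real.sin_two_pi]
  ring

theorem gap_eigenfunction_two_particles (lam mu : ℝ) (hlam : 0 < lam) (hmu : 0 < mu) :
    let g : ℝ → ℝ := fun v => (1 / Real.sqrt (2 * π)) * Real.exp (-v ^ 2 / 2)
    let Q : (ℝ × ℝ → ℝ) → (ℝ × ℝ → ℝ) := fun u p =>
      (1 / (2 * π)) * ∫ θ in (0:ℝ)..(2 * π),
        u (p.1 * Real.cos θ + p.2 * Real.sin θ, -p.1 * Real.sin θ + p.2 * Real.cos θ)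
    let P : (ℝ × ℝ → ℝ) → (ℝ × ℝ → ℝ) := fun u p => ∫ w : ℝ, u (w, p.2) * g w
    let L : (ℝ × ℝ → ℝ) → (ℝ × ℝ → ℝ) := fun u p =>
      2 * lam * (u p - Q u p) + mu * (u p - P u p)
    let e₁ : ℝ × ℝ → ℝ := fun p => p.1 ^ 2 - 1
    let e₂ : ℝ × ℝ → ℝ := fun p => p.2 ^ 2 - 1
    let Δ : ℝ := ((2 * lam + mu) - Real.sqrt (4 * lam ^ 2 + mu ^ 2)) / 2
    -- invariance of span{H₂(v₁), H₂(v₂)} under L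
    (∃ a b c d : ℝ, (∀ p, L e₁ p = a * e₁ p + b * e₂ p) ∧
        (∀ p, L e₂ p = c * e₁ p + d * e₂ p)) ∧
    -- Δ is an eigenvalue with the stated eigenvector
    (∀ p, L (fun w => (2 * lam / (2 * lam + mu - Δ)) * e₁ w
            + (2 * lam / (2 * lam - Δ)) * e₂ w) p
        = Δ * ((2 * lam / (2 * lam + mu - Δ)) * e₁ p
            + (2 * lam / (2 * lam - Δ)) * e₂ p)) ∧
    -- Δ is the smallest eigenvalue of the restriction of L to span{e₁, e₂}
    (∀ t x y : ℝ, ¬(x = 0 ∧ y = 0) →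
      (∀ p, L (fun w => x * e₁ w + y * e₂ w) p = t * (x * e₁ p + y * e₂ p)) →
      Δ ≤ t) := by
  intro g Q P L e₁ e₂ Δ
  have hπ : (0:ℝ) < π := Real.pi_pos
  have hsqrt : Real.sqrt (2 * π) ≠ 0 := ne_of_gt (Real.sqrt_pos.2 (by positivity))
  -- the key computation
  have key : ∀ x y : ℝ, ∀ p : ℝ × ℝ, L (fun w => x * e₁ w + y * e₂ w) p =
      ((lam + mu) * x - lam * y) * e₁ p + (lam * y - lam * x) * e₂ p := by
    intro x y p
    have hQ : Q (fun w => x * e₁ w + y * e₂ w) p = ((x + y) / 2) * (e₁ p + e₂ p) := by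
      simp only [Q, e₁, e₂]
      rw [aux_rot18 x y p.1 p.2]
      field_simp
      ring
    have hP : P (fun w => x * e₁ w + y * e₂ w) p = y * e₂ p := by
      simp only [P, e₁, e₂, g]
      have he : (fun w : ℝ => (x * (w ^ 2 - 1) + y * (p.2 ^ 2 - 1)) *
            ((1 / Real.sqrt (2 * π)) * Real.exp (-w ^ 2 / 2)))
          = fun w : ℝ => (x * (1 / Real.sqrt (2 * π))) * ((w ^ 2 - 1) * Real.exp (-w ^ 2 / 2))
            + (y * (p.2 ^ 2 - 1) * (1 / Real.sqrt (2 * π))) * Real.exp (-w ^ 2 / 2) := by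
        funext w; ring
      rw [he, integral_add (aux_integrable18.const_mul _) (aux_integrable_gauss18.const_mul _),
        integral_const_mul, integral_const_mul, aux_int_zero18, aux_gauss18]
      field_simp
      ring
    simp only [L]
    rw [hQ, hP]
    simp only [e₁, e₂]
    ring
  -- spectral facts about Δ
  set s : ℝ := Real.sqrt (4 * lam ^ 2 + mu ^ 2) with hs_def
  have hs0 : 0 ≤ s := Real.sqrt_nonneg _
  have hs2 : s ^ 2 = 4 * lam ^ 2 + mu ^ 2 := Real.sq_sqrt (by positivity)
  have hsmu : mu < s := by nlinarith
  have hslt : s < 2 * lam + mu := by nlinarith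
  have hΔ : Δ = ((2 * lam + mu) - s) / 2 := rfl
  have hchar : Δ ^ 2 - (2 * lam + mu) * Δ + lam * mu = 0 := by
    rw [hΔ]; linear_combination hs2 / 4
  have hd1 : 2 * lam + mu - Δ ≠ 0 := by rw [hΔ]; nlinarith
  have hd2 : 2 * lam - Δ ≠ 0 := by rw [hΔ]; nlinarith
  refine ⟨⟨lam + mu, -lam, -lam, lam, ?_, ?_⟩, ?_, ?_⟩
  · intro p
    have he : e₁ = (fun w => (1:ℝ) * e₁ w + 0 * e₂ w) := funext fun w => by ring
    calc L e₁ p = L (fun w => (1:ℝ) * e₁ w + 0 * e₂ w) p := by rw [← he]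
      _ = (lam + mu) * e₁ p + -lam * e₂ p := by rw [key]; ring
  · intro p
    have he : e₂ = (fun w => (0:ℝ) * e₁ w + 1 * e₂ w) := funext fun w => by ring
    calc L e₂ p = L (fun w => (0:ℝ) * e₁ w + 1 * e₂ w) p := by rw [← he]
      _ = -lam * e₁ p + lam * e₂ p := by rw [key]; ring
  · intro p
    rw [key]
    have hX : 2 * lam / (2 * lam + mu - Δ) * (2 * lam + mu - Δ) = 2 * lam :=
      div_mul_cancel₀ _ hd1
    have hY : 2 * lam / (2 * lam - Δ) * (2 * lam - Δ) = 2 * lam :=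
      div_mul_cancel₀ _ hd2
    have hA : (lam + mu) * (2 * lam / (2 * lam + mu - Δ)) - lam * (2 * lam / (2 * lam - Δ))
        = Δ * (2 * lam / (2 * lam + mu - Δ)) := by
      have hz : ((lam + mu) * (2 * lam / (2 * lam + mu - Δ)) - lam * (2 * lam / (2 * lam - Δ))
          - Δ * (2 * lam / (2 * lam + mu - Δ))) * ((2 * lam + mu - Δ) * (2 * lam - Δ)) = 0 := by
        linear_combination ((lam + mu - Δ) * (2 * lam - Δ)) * hX
          - (lam * (2 * lam + mu - Δ)) * hY + (2 * lam) * hchar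
      rcases mul_eq_zero.1 hz with h | h
      · linarith
      · exact absurd h (mul_ne_zero hd1 hd2)
    have hB : lam * (2 * lam / (2 * lam - Δ)) - lam * (2 * lam / (2 * lam + mu - Δ))
        = Δ * (2 * lam / (2 * lam - Δ)) := by
      have hz : (lam * (2 * lam / (2 * lam - Δ)) - lam * (2 * lam / (2 * lam + mu - Δ))
          - Δ * (2 * lam / (2 * lam - Δ))) * ((2 * lam + mu - Δ) * (2 * lam - Δ)) = 0 := by
        linear_combination ((lam - Δ) * (2 * lam + mu - Δ)) * hY
          - (lam * (2 * lam - Δ)) * hX + (2 * lam) * hchar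
      rcases mul_eq_zero.1 hz with h | h
      · linarith
      · exact absurd h (mul_ne_zero hd1 hd2)
    linear_combination e₁ p * hA + e₂ p * hB
  · intro t x y hxy hL
    have h1 := hL (0, 1)
    have h2 := hL (1, 0)
    rw [key] at h1 h2
    simp only [e₁, e₂] at h1 h2
    norm_num at h1 h2
    -- h1 from p = (0,1): e₁ = -1, e₂ = 0 ; h2 from p = (1,0): e₁ = 0, e₂ = -1
    have heq1 : (lam + mu) * x - lam * y = t * x := by linear_combination -h1
    have heq2 : lam * y - lam * x = t * y := by linear_combination -h2
    have hx : x ≠ 0 := by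
      intro h0
      apply hxy
      refine ⟨h0, ?_⟩
      have h5 : lam * y = 0 := by rw [h0] at heq1; linear_combination -heq1
      exact (mul_eq_zero.1 h5).resolve_left (ne_of_gt hlam)
    have hy : y ≠ 0 := by
      intro h0
      apply hxy
      refine ⟨?_, h0⟩
      have h5 : lam * x = 0 := by rw [h0] at heq2; linear_combination -heq2
      exact (mul_eq_zero.1 h5).resolve_left (ne_of_gt hlam)
    have h3 : (lam ^ 2 - (lam + mu - t) * (lam - t)) * (x * y) = 0 := by
      linear_combination (-(lam - t) * y) * heq1 + (-lam * y) * heq2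
    have h4 : lam ^ 2 - (lam + mu - t) * (lam - t) = 0 := by
      rcases mul_eq_zero.1 h3 with h | h
      · exact h
      · exact absurd h (mul_ne_zero hx hy)
    have hchar' : t ^ 2 - (2 * lam + mu) * t + lam * mu = 0 := by linear_combination -h4
    by_contra hcon
    push_neg at hcon
    rw [hΔ] at hcon
    have hu : 0 < (2 * lam + mu) - 2 * t - s := by linarith
    have hv : 0 < (2 * lam + mu) - 2 * t + s := by linarith
    nlinarith [mul_pos hu hv, hchar', hs2]
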